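/- Let M(0) be the 4×4 matrix with rows (p,0,0,0), (0,1/2,0,0), (1/2,0,0,0), (0,1/2,0,0), where 0 < p < 1. Then for all n ≥ 1, M(0)^n has rows (p^n,0,0,0), (0,2^{-n},0,0), (p^{n-1}/2,0,0,0), (0,2^{-n},0,0). Consequently: if p > 1/2, then M(0)^n/(e'M(0)^n e) converges to (2p/(2p+1)) times the matrix with rows (1,0,0,0),(0,0,0,0),(1/(2p),0,0,0),(0,0,0,0); if p < 1/2, it converges to the matrix with rows (0,0,0,0),(0,1/2,0,0),(0,0,0,0),(0,1/2,0,0). In both cases the limit has rank 1. -/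

import Mathlib

open Matrix Filter

/-- Kaijser's matrix `M(0)` with parameter `p`. -/
noncomputable def M015 (p : ℝ) : Matrix (Fin 4) (Fin 4) ℝ :=
  !![p, 0, 0, 0; 0, 1/2, 0, 0; 1/2, 0, 0, 0; 0, 1/2, 0, 0]

private lemma rank_le_one_aux15 (A : Matrix (Fin 4) (Fin 4) ℝ) (u v : Fin 4 → ℝ)
    (h : A = vecMulVec u v) : A.rank ≤ 1 := by
  rw [h, vecMulVec_eq Unit]
  exact le_trans (rank_mul_le_left _ _) (by simpa using rank_le_card_width (replicateCol Unit u))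

private lemma rank_pos_aux15 (A : Matrix (Fin 4) (Fin 4) ℝ) (x : Fin 4 → ℝ)
    (h : A.mulVec x ≠ 0) : 0 < A.rank := by
  rw [Matrix.rank]
  haveI : Nontrivial (LinearMap.range A.mulVecLin) :=
    nontrivial_of_ne ⟨A.mulVec x, x, rfl⟩ 0 (by simp [Subtype.ext_iff, h])
  exact Module.finrank_pos

private lemma inv_mul_helper15 (d T w : ℝ) (hd : d ≠ 0) : (d * T)⁻¹ * (d * w) = T⁻¹ * w := by
  by_cases hT : T = 0
  · simp [hT]
  · field_simp

private lemma inv_mul_helper15' (d T : ℝ) (hd : d ≠ 0) : (d * T)⁻¹ * d = T⁻¹ := by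
  have := inv_mul_helper15 d T 1 hd
  simpa using this

private lemma vmv15A (p : ℝ) (hp : p ≠ 0) (h2p1 : (2*p+1:ℝ) ≠ 0) :
    ((2*p/(2*p+1)) • !![(1:ℝ), 0, 0, 0; 0, 0, 0, 0; 1/(2*p), 0, 0, 0; 0, 0, 0, 0])
    = vecMulVec ![2*p/(2*p+1), 0, 1/(2*p+1), 0] ![1, 0, 0, 0] := by
  ext i j
  fin_cases i <;> fin_cases j <;>
    simp [vecMulVec, Matrix.smul_apply, smul_eq_mul, Matrix.vecHead, Matrix.vecTail] <;>
    field_simp <;> ring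

private lemma vmv15B :
    !![(0:ℝ), 0, 0, 0; 0, 1/2, 0, 0; 0, 0, 0, 0; 0, 1/2, 0, 0]
    = vecMulVec ![0, 1, 0, 1] ![0, 1/2, 0, 0] := by
  ext i j
  fin_cases i <;> fin_cases j <;> simp [vecMulVec, Matrix.vecHead, Matrix.vecTail]

private lemma mulvec15A (p : ℝ) (h : 2*p/(2*p+1) ≠ 0) :
    ((2*p/(2*p+1)) • !![(1:ℝ), 0, 0, 0; 0, 0, 0, 0; 1/(2*p), 0, 0, 0; 0, 0, 0, 0]).mulVec
      ![1, 0, 0, 0] ≠ 0 := by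
  intro hc
  have h0 := congrFun hc 0
  simp [Matrix.mulVec, dotProduct, Fin.sum_univ_four, Matrix.smul_apply, smul_eq_mul,
    Matrix.vecHead, Matrix.vecTail, h] at h0

private lemma mulvec15B :
    (!![(0:ℝ), 0, 0, 0; 0, 1/2, 0, 0; 0, 0, 0, 0; 0, 1/2, 0, 0]).mulVec ![0, 1, 0, 0] ≠ 0 := by
  intro hc
  have h1 := congrFun hc 1
  simp [Matrix.mulVec, dotProduct, Fin.sum_univ_four, Matrix.vecHead, Matrix.vecTail] at h1

private lemma decomp15 (p : ℝ) (hp : p ≠ 0) (k : ℕ) :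
    !![p^(k+1), 0, 0, 0; 0, (1/2:ℝ)^(k+1), 0, 0; p^k/2, 0, 0, 0; 0, (1/2:ℝ)^(k+1), 0, 0]
    = p^(k+1) • !![(1:ℝ), 0, 0, 0; 0, 0, 0, 0; 1/(2*p), 0, 0, 0; 0, 0, 0, 0]
      + (1/2:ℝ)^(k+1) • !![(0:ℝ), 0, 0, 0; 0, 1, 0, 0; 0, 0, 0, 0; 0, 1, 0, 0] := by
  ext i j
  fin_cases i <;> fin_cases j <;>
    simp [Matrix.add_apply, Matrix.smul_apply, smul_eq_mul, Matrix.vecHead, Matrix.vecTail] <;>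
    field_simp <;> ring

private lemma target15 :
    (0:ℝ) • !![(1:ℝ), 0, 0, 0; 0, 0, 0, 0; 1/(2*1), 0, 0, 0; 0, 0, 0, 0]
      + (2⁻¹:ℝ) • !![(0:ℝ), 0, 0, 0; 0, 1, 0, 0; 0, 0, 0, 0; 0, 1, 0, 0]
    = !![(0:ℝ), 0, 0, 0; 0, 1/2, 0, 0; 0, 0, 0, 0; 0, 1/2, 0, 0] := by
  ext i j
  fin_cases i <;> fin_cases j <;>
    simp [Matrix.add_apply, Matrix.smul_apply, smul_eq_mul, Matrix.vecHead, Matrix.vecTail] <;>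
    norm_num

private lemma target15' (q : ℝ) :
    (0:ℝ) • !![(1:ℝ), 0, 0, 0; 0, 0, 0, 0; q, 0, 0, 0; 0, 0, 0, 0]
      + (2⁻¹:ℝ) • !![(0:ℝ), 0, 0, 0; 0, 1, 0, 0; 0, 0, 0, 0; 0, 1, 0, 0]
    = !![(0:ℝ), 0, 0, 0; 0, 1/2, 0, 0; 0, 0, 0, 0; 0, 1/2, 0, 0] := by
  ext i j
  fin_cases i <;> fin_cases j <;>
    simp [Matrix.add_apply, Matrix.smul_apply, smul_eq_mul, Matrix.vecHead, Matrix.vecTail] <;>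
    norm_num

/-- For Kaijser's `M(0)`: explicit formula for `M(0)ⁿ` (`n ≥ 1`), and the rescaled powers
`M(0)ⁿ/(e'M(0)ⁿe)` converge to an explicit rank-one matrix (one limit if `p > 1/2`,
another if `p < 1/2`). -/
theorem stmt15 (p : ℝ) (hp0 : 0 < p) (hp1 : p < 1) :
    (∀ n : ℕ, 1 ≤ n → (M015 p) ^ n =
      !![p^n, 0, 0, 0; 0, (1/2:ℝ)^n, 0, 0; p^(n-1)/2, 0, 0, 0; 0, (1/2:ℝ)^n, 0, 0]) ∧
    (1/2 < p →
      Tendsto (fun n => (∑ i, ∑ j, ((M015 p) ^ n) i j)⁻¹ • (M015 p) ^ n) atTop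
        (nhds ((2*p/(2*p+1)) •
          !![(1:ℝ), 0, 0, 0; 0, 0, 0, 0; 1/(2*p), 0, 0, 0; 0, 0, 0, 0])) ∧
      Matrix.rank ((2*p/(2*p+1)) •
        !![(1:ℝ), 0, 0, 0; 0, 0, 0, 0; 1/(2*p), 0, 0, 0; 0, 0, 0, 0]) = 1) ∧
    (p < 1/2 →
      Tendsto (fun n => (∑ i, ∑ j, ((M015 p) ^ n) i j)⁻¹ • (M015 p) ^ n) atTop
        (nhds !![(0:ℝ), 0, 0, 0; 0, 1/2, 0, 0; 0, 0, 0, 0; 0, 1/2, 0, 0]) ∧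
      Matrix.rank !![(0:ℝ), 0, 0, 0; 0, 1/2, 0, 0; 0, 0, 0, 0; 0, 1/2, 0, 0] = 1) := by
  have hp : p ≠ 0 := ne_of_gt hp0
  obtain ⟨A, hAdef⟩ : ∃ A : Matrix (Fin 4) (Fin 4) ℝ,
      A = !![(1:ℝ), 0, 0, 0; 0, 0, 0, 0; 1/(2*p), 0, 0, 0; 0, 0, 0, 0] := ⟨_, rfl⟩
  obtain ⟨B, hBdef⟩ : ∃ B : Matrix (Fin 4) (Fin 4) ℝ,
      B = !![(0:ℝ), 0, 0, 0; 0, 1, 0, 0; 0, 0, 0, 0; 0, 1, 0, 0] := ⟨_, rfl⟩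
  -- explicit formula, stated at k+1
  have key' : ∀ k : ℕ, (M015 p) ^ (k+1) =
      !![p^(k+1), 0, 0, 0; 0, (1/2:ℝ)^(k+1), 0, 0; p^k/2, 0, 0, 0; 0, (1/2:ℝ)^(k+1), 0, 0] := by
    intro k
    induction k with
    | zero =>
      ext i j
      fin_cases i <;> fin_cases j <;> simp [M015, Matrix.vecHead, Matrix.vecTail]
    | succ m ih =>
      rw [pow_succ, ih]
      ext i j
      fin_cases i <;> fin_cases j <;>
        simp [M015, Matrix.mul_apply, Fin.sum_univ_four, Matrix.vecHead, Matrix.vecTail] <;> ring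
  have key : ∀ n : ℕ, 1 ≤ n → (M015 p) ^ n =
      !![p^n, 0, 0, 0; 0, (1/2:ℝ)^n, 0, 0; p^(n-1)/2, 0, 0, 0; 0, (1/2:ℝ)^n, 0, 0] := by
    intro n hn
    have h := key' (n - 1)
    rwa [Nat.sub_add_cancel hn] at h
  -- decomposition M^n = p^n • A + (1/2)^n • B for n ≥ 1
  have hM : ∀ k : ℕ, (M015 p) ^ (k+1) = p^(k+1) • A + (1/2:ℝ)^(k+1) • B := by
    intro k
    rw [key' k, hAdef, hBdef]
    exact decomp15 p hp k
  set S : ℕ → ℝ := fun n => ∑ i, ∑ j, ((M015 p) ^ n) i j with hSdef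
  obtain ⟨c, hc⟩ : ∃ c : ℝ, c = 1 + 1/(2*p) := ⟨_, rfl⟩
  have hcpos : 0 < c := by rw [hc]; positivity
  have hS : ∀ k : ℕ, S (k+1) = p^(k+1) * c + 2 * (1/2:ℝ)^(k+1) := by
    intro k
    simp only [hSdef, hM k]
    rw [hc]
    simp [hAdef, hBdef, Fin.sum_univ_four, Matrix.add_apply, Matrix.smul_apply, smul_eq_mul,
      Matrix.vecHead, Matrix.vecTail]
    ring
  have hscaled : ∀ k : ℕ, (S (k+1))⁻¹ • (M015 p) ^ (k+1)
      = ((S (k+1))⁻¹ * p^(k+1)) • A + ((S (k+1))⁻¹ * (1/2:ℝ)^(k+1)) • B := by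
    intro k
    rw [hM k, smul_add, smul_smul, smul_smul]
  refine ⟨key, ?_, ?_⟩
  · -- case p > 1/2
    intro hp2
    have h2p1 : (2*p+1 : ℝ) ≠ 0 := by positivity
    constructor
    · obtain ⟨r, hr⟩ : ∃ r : ℝ, r = 1/(2*p) := ⟨_, rfl⟩
      have hr0 : 0 ≤ r := by rw [hr]; positivity
      have hr1 : r < 1 := by rw [hr, div_lt_one (by linarith)]; linarith
      have hpr : (1/2:ℝ) = p * r := by rw [hr]; field_simp
      have hrpow : Tendsto (fun n : ℕ => r ^ n) atTop (nhds 0) :=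
        tendsto_pow_atTop_nhds_zero_of_lt_one hr0 hr1
      have hSfac : ∀ k : ℕ, S (k+1) = p^(k+1) * (c + 2 * r^(k+1)) := by
        intro k
        rw [hS k, hpr, mul_pow]
        ring
      have hdenlim : Tendsto (fun n : ℕ => (c + 2 * r^n)⁻¹) atTop (nhds c⁻¹) := by
        have h := ((tendsto_const_nhds (x := c)).add (hrpow.const_mul 2)).inv₀
          (by simpa using ne_of_gt hcpos)
        simpa using h
      have hu : Tendsto (fun n : ℕ => (S n)⁻¹ * p^n) atTop (nhds c⁻¹) := by
        refine Tendsto.congr' ?_ hdenlim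
        filter_upwards [eventually_ge_atTop 1] with n hn
        obtain ⟨k, hk⟩ : ∃ k, n = k + 1 := ⟨n - 1, (Nat.sub_add_cancel hn).symm⟩
        subst hk
        rw [hSfac k]
        exact (inv_mul_helper15' _ _ (pow_ne_zero _ hp)).symm
      have hv : Tendsto (fun n : ℕ => (S n)⁻¹ * (1/2:ℝ)^n) atTop (nhds 0) := by
        have h1 : Tendsto (fun n : ℕ => (c + 2 * r^n)⁻¹ * r^n) atTop (nhds 0) := by
          simpa using hdenlim.mul hrpow
        refine Tendsto.congr' ?_ h1
        filter_upwards [eventually_ge_atTop 1] with n hn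
        obtain ⟨k, hk⟩ : ∃ k, n = k + 1 := ⟨n - 1, (Nat.sub_add_cancel hn).symm⟩
        subst hk
        have e2 : ((1:ℝ)/2)^(k+1) = p^(k+1) * r^(k+1) := by rw [hpr, mul_pow]
        rw [hSfac k, e2]
        exact (inv_mul_helper15 _ _ _ (pow_ne_zero _ hp)).symm
      have hlim : Tendsto (fun n => (S n)⁻¹ • (M015 p) ^ n) atTop
          (nhds (c⁻¹ • A + (0:ℝ) • B)) := by
        refine Tendsto.congr' ?_ ((hu.smul_const A).add (hv.smul_const B))
        filter_upwards [eventually_ge_atTop 1] with n hn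
        obtain ⟨k, hk⟩ : ∃ k, n = k + 1 := ⟨n - 1, (Nat.sub_add_cancel hn).symm⟩
        subst hk
        exact (hscaled k).symm
      have hceq : c⁻¹ = 2*p/(2*p+1) := by
        rw [hc, show (1:ℝ) + 1/(2*p) = (2*p+1)/(2*p) by field_simp, inv_div]
      rw [hceq, zero_smul, add_zero, hAdef] at hlim
      exact hlim
    · -- rank = 1
      have hle := rank_le_one_aux15 _ _ _ (vmv15A p hp h2p1)
      have hpq : 2*p/(2*p+1) ≠ 0 := div_ne_zero (by linarith) h2p1
      have hpos := rank_pos_aux15 _ _ (mulvec15A p hpq)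
      omega
  · -- case p < 1/2
    intro hp2
    constructor
    · obtain ⟨s, hs⟩ : ∃ s : ℝ, s = 2*p := ⟨_, rfl⟩
      have hs0 : 0 ≤ s := by rw [hs]; positivity
      have hs1 : s < 1 := by rw [hs]; linarith
      have hps : p = (1/2:ℝ) * s := by rw [hs]; ring
      have hspow : Tendsto (fun n : ℕ => s ^ n) atTop (nhds 0) :=
        tendsto_pow_atTop_nhds_zero_of_lt_one hs0 hs1
      have hq : ((1/2:ℝ)) ≠ 0 := by norm_num
      have hSfac : ∀ k : ℕ, S (k+1) = (1/2:ℝ)^(k+1) * (c * s^(k+1) + 2) := by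
        intro k
        rw [hS k, hps, mul_pow]
        ring
      have hdenlim : Tendsto (fun n : ℕ => (c * s^n + 2)⁻¹) atTop (nhds 2⁻¹) := by
        have h := ((hspow.const_mul c).add (tendsto_const_nhds (x := (2:ℝ)))).inv₀ (by norm_num)
        simpa using h
      have hu : Tendsto (fun n : ℕ => (S n)⁻¹ * p^n) atTop (nhds 0) := by
        have h1 : Tendsto (fun n : ℕ => (c * s^n + 2)⁻¹ * s^n) atTop (nhds 0) := by
          simpa using hdenlim.mul hspow
        refine Tendsto.congr' ?_ h1
        filter_upwards [eventually_ge_atTop 1] with n hn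
        obtain ⟨k, hk⟩ : ∃ k, n = k + 1 := ⟨n - 1, (Nat.sub_add_cancel hn).symm⟩
        subst hk
        have e2 : p^(k+1) = ((1:ℝ)/2)^(k+1) * s^(k+1) := by rw [hps, mul_pow]
        rw [hSfac k, e2]
        exact (inv_mul_helper15 _ _ _ (pow_ne_zero _ hq)).symm
      have hv : Tendsto (fun n : ℕ => (S n)⁻¹ * (1/2:ℝ)^n) atTop (nhds 2⁻¹) := by
        refine Tendsto.congr' ?_ hdenlim
        filter_upwards [eventually_ge_atTop 1] with n hn
        obtain ⟨k, hk⟩ : ∃ k, n = k + 1 := ⟨n - 1, (Nat.sub_add_cancel hn).symm⟩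
        subst hk
        rw [hSfac k]
        exact (inv_mul_helper15' _ _ (pow_ne_zero _ hq)).symm
      have hlim : Tendsto (fun n => (S n)⁻¹ • (M015 p) ^ n) atTop
          (nhds ((0:ℝ) • A + (2⁻¹:ℝ) • B)) := by
        refine Tendsto.congr' ?_ ((hu.smul_const A).add (hv.smul_const B))
        filter_upwards [eventually_ge_atTop 1] with n hn
        obtain ⟨k, hk⟩ : ∃ k, n = k + 1 := ⟨n - 1, (Nat.sub_add_cancel hn).symm⟩
        subst hk
        exact (hscaled k).symm
      rw [hAdef, hBdef, target15' (1/(2*p))] at hlim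
      exact hlim
    · have hle : Matrix.rank !![(0:ℝ), 0, 0, 0; 0, 1/2, 0, 0; 0, 0, 0, 0; 0, 1/2, 0, 0] ≤ 1 :=
        rank_le_one_aux15 _ _ _ vmv15B
      have hpos : 0 < Matrix.rank !![(0:ℝ), 0, 0, 0; 0, 1/2, 0, 0; 0, 0, 0, 0; 0, 1/2, 0, 0] :=
        rank_pos_aux15 _ _ mulvec15B
      omega
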